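/- Let A ∈ ℝ^{m×n}, b ∈ ℝ^m, L ∈ ℝ^{s×n} with full column rank, and W_1,…,W_k ∈ ℝ^{m×ℓ} arbitrary. Write A_i = W_iᵀA, b_i = W_iᵀb. Let Λ_1,…,Λ_k be reals with λ_j := Σ_{i=1}^{j} Λ_i > 0 for every j ≤ k. For arbitrary x_0 ∈ ℝ^n define the sampled Tikhonov iterates x_j = x_{j-1} − B_j (A_jᵀ(A_j x_{j-1} − b_j) + Λ_j LᵀL x_{j-1}) where B_j = (λ_j LᵀL + Σ_{i=1}^{j} A_iᵀA_i)^{-1}. Then x_k is the unique minimizer of x ↦ Σ_{i=1}^{k} ‖A_i x − b_i‖² + λ_k ‖L x‖², i.e. x_k = B_k Σ_{i=1}^{k} A_iᵀ b_i, independent of x_0. -/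

import Mathlib

open Matrix Finset

lemma my_posDef_smul {n : ℕ} {M : Matrix (Fin n) (Fin n) ℝ} (hM : M.PosDef)
    {c : ℝ} (hc : 0 < c) : (c • M).PosDef := by
  refine Matrix.PosDef.of_dotProduct_mulVec_pos ?_ (fun v hv => ?_)
  · unfold Matrix.IsHermitian
    rw [conjTranspose_smul, hM.1]
    simp
  · rw [smul_mulVec, dotProduct_smul, smul_eq_mul]
    exact mul_pos hc (hM.dotProduct_mulVec_pos hv)

lemma my_posDef_transpose_mul_self {s n : ℕ} (L : Matrix (Fin s) (Fin n) ℝ)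
    (hinj : ∀ v : Fin n → ℝ, L *ᵥ v = 0 → v = 0) : (Lᵀ * L).PosDef := by
  refine Matrix.PosDef.of_dotProduct_mulVec_pos ?_ (fun v hv => ?_)
  · unfold Matrix.IsHermitian
    rw [conjTranspose_eq_transpose_of_trivial, transpose_mul, transpose_transpose]
  · have h1 : (Lᵀ * L) *ᵥ v = Lᵀ *ᵥ (L *ᵥ v) := (mulVec_mulVec _ _ _).symm
    rw [star_trivial, h1, dotProduct_mulVec, vecMul_transpose]
    have hLv : L *ᵥ v ≠ 0 := fun h => hv (hinj v h)
    have := dotProduct_star_self_pos_iff.mpr hLv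
    simpa using this

lemma my_posSemidef_sum {n : ℕ} (j : ℕ) (M : ℕ → Matrix (Fin n) (Fin n) ℝ)
    (hM : ∀ i, (M i).PosSemidef) :
    (∑ i ∈ Finset.range j, M i).PosSemidef := by
  induction j with
  | zero => simpa using Matrix.PosSemidef.zero
  | succ j ih =>
    rw [Finset.sum_range_succ]
    exact ih.add (hM j)

lemma my_dot_self {s n : ℕ} (L : Matrix (Fin s) (Fin n) ℝ) (z : Fin n → ℝ) :
    z ⬝ᵥ (Lᵀ * L) *ᵥ z = (L *ᵥ z) ⬝ᵥ (L *ᵥ z) := by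
  rw [← mulVec_mulVec, dotProduct_mulVec, vecMul_transpose]

lemma my_sum_mulVec {n : ℕ} {ι : Type*} (t : Finset ι) (M : ι → Matrix (Fin n) (Fin n) ℝ)
    (z : Fin n → ℝ) : (∑ i ∈ t, M i) *ᵥ z = ∑ i ∈ t, M i *ᵥ z := by
  induction t using Finset.cons_induction with
  | empty => simp
  | cons a t ha ih => simp [Finset.sum_cons, add_mulVec, ih]

lemma my_dotProduct_sum {n : ℕ} {ι : Type*} (t : Finset ι) (z : Fin n → ℝ)
    (v : ι → Fin n → ℝ) : z ⬝ᵥ ∑ i ∈ t, v i = ∑ i ∈ t, z ⬝ᵥ v i := by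
  induction t using Finset.cons_induction with
  | empty => simp
  | cons a t ha ih => simp [Finset.sum_cons, dotProduct_add, ih]

lemma my_sum_dotProduct {n : ℕ} {ι : Type*} (t : Finset ι) (z : Fin n → ℝ)
    (v : ι → Fin n → ℝ) : (∑ i ∈ t, v i) ⬝ᵥ z = ∑ i ∈ t, v i ⬝ᵥ z := by
  induction t using Finset.cons_induction with
  | empty => simp
  | cons a t ha ih => simp [Finset.sum_cons, add_dotProduct, ih]

lemma my_quad_unique_min {n : ℕ} (M : Matrix (Fin n) (Fin n) ℝ) (hM : M.PosDef)
    (c : Fin n → ℝ) (d : ℝ) (g : (Fin n → ℝ) → ℝ)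
    (hg : ∀ z, g z = z ⬝ᵥ M *ᵥ z - 2 * (c ⬝ᵥ z) + d)
    (xs : Fin n → ℝ) (hxs : M *ᵥ xs = c) :
    (∀ z, g xs ≤ g z) ∧ ∀ z, (∀ w, g z ≤ g w) → z = xs := by
  have hsymm : Mᵀ = M := by
    have := hM.1
    rwa [Matrix.IsHermitian, conjTranspose_eq_transpose_of_trivial] at this
  have hxMz : ∀ z, xs ⬝ᵥ M *ᵥ z = c ⬝ᵥ z := by
    intro z
    rw [dotProduct_mulVec, ← hsymm, vecMul_transpose, hxs]
  have key : ∀ z, g z - g xs = (z - xs) ⬝ᵥ M *ᵥ (z - xs) := by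
    intro z
    have h1 : (z - xs) ⬝ᵥ M *ᵥ (z - xs)
        = z ⬝ᵥ M *ᵥ z - z ⬝ᵥ c - (c ⬝ᵥ z - xs ⬝ᵥ c) := by
      rw [mulVec_sub, sub_dotProduct, dotProduct_sub, dotProduct_sub, hxMz z, hxs]
    rw [hg, hg, h1, hxs, dotProduct_comm z c, dotProduct_comm xs c]
    ring
  constructor
  · intro z
    have h0 : 0 ≤ (z - xs) ⬝ᵥ M *ᵥ (z - xs) := by
      have := hM.posSemidef.dotProduct_mulVec_nonneg (z - xs)
      simpa using this
    have := key z
    linarith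
  · intro z hz
    by_contra hne
    have hsub : z - xs ≠ 0 := sub_ne_zero.mpr hne
    have hpos : 0 < (z - xs) ⬝ᵥ M *ᵥ (z - xs) := by
      have := hM.dotProduct_mulVec_pos hsub
      simpa using this
    have h1 : g xs ≤ g z := by
      have h0 : 0 ≤ (z - xs) ⬝ᵥ M *ᵥ (z - xs) := le_of_lt hpos
      have := key z
      linarith
    have h2 : g z ≤ g xs := hz xs
    have : g z = g xs := le_antisymm h2 h1
    have := key z
    linarith

lemma my_expand_sq {ℓ n : ℕ} (C : Matrix (Fin ℓ) (Fin n) ℝ) (d : Fin ℓ → ℝ) (z : Fin n → ℝ) :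
    (C *ᵥ z - d) ⬝ᵥ (C *ᵥ z - d)
      = z ⬝ᵥ (Cᵀ * C) *ᵥ z - 2 * ((Cᵀ *ᵥ d) ⬝ᵥ z) + d ⬝ᵥ d := by
  have h1 : z ⬝ᵥ (Cᵀ * C) *ᵥ z = (C *ᵥ z) ⬝ᵥ (C *ᵥ z) := by
    rw [← mulVec_mulVec, dotProduct_mulVec, vecMul_transpose]
  have h2 : (Cᵀ *ᵥ d) ⬝ᵥ z = d ⬝ᵥ (C *ᵥ z) := by
    rw [← vecMul_transpose, transpose_transpose, ← dotProduct_mulVec]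
  have h3 : (C *ᵥ z) ⬝ᵥ d = d ⬝ᵥ (C *ᵥ z) := dotProduct_comm _ _
  rw [sub_dotProduct, dotProduct_sub, dotProduct_sub, h1, h2, h3]
  ring

lemma my_sum_sq_eq_dot {ℓ : ℕ} (v : Fin ℓ → ℝ) : ∑ p, v p ^ 2 = v ⬝ᵥ v := by
  simp [dotProduct, sq]

/-- the sampled Tikhonov (`sTik`) iterate `x k` is the unique minimizer of
`x ↦ Σ_{i=1}^k ‖A_i x − b_i‖² + λ_k‖Lx‖²`, i.e. `x k = B k (Σ A_iᵀ b_i)`,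
independent of the initial iterate. -/
theorem sTik_iterate_is_unique_minimizer
    {m n s ℓ : ℕ} (k : ℕ) (hk : 0 < k)
    (A : Matrix (Fin m) (Fin n) ℝ) (b : Fin m → ℝ)
    (L : Matrix (Fin s) (Fin n) ℝ) (hL : L.rank = n)
    (W : ℕ → Matrix (Fin m) (Fin ℓ) ℝ)
    (Ai : ℕ → Matrix (Fin ℓ) (Fin n) ℝ) (hAi : ∀ i, Ai i = (W i)ᵀ * A)
    (bi : ℕ → Fin ℓ → ℝ) (hbi : ∀ i, bi i = (W i)ᵀ.mulVec b)
    (Lam : ℕ → ℝ) (lam : ℕ → ℝ)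
    (hlamdef : ∀ j, lam j = ∑ i ∈ Finset.range j, Lam i)
    (hpos : ∀ j, 0 < j → j ≤ k → 0 < lam j)
    (x0 : Fin n → ℝ)
    (B : ℕ → Matrix (Fin n) (Fin n) ℝ)
    (hB : ∀ j, B j = (lam j • (Lᵀ * L) + ∑ i ∈ Finset.range j, (Ai i)ᵀ * Ai i)⁻¹)
    (x : ℕ → Fin n → ℝ) (hx0 : x 0 = x0)
    (hx : ∀ j, x (j + 1) =
      x j - (B (j + 1)).mulVec ((Ai j)ᵀ.mulVec ((Ai j).mulVec (x j) - bi j)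
        + Lam j • (Lᵀ * L).mulVec (x j)))
    (f : (Fin n → ℝ) → ℝ)
    (hf : ∀ z, f z = (∑ i ∈ Finset.range k, ∑ p, ((Ai i).mulVec z - bi i) p ^ 2)
        + lam k * ∑ p, (L.mulVec z) p ^ 2) :
    ((∀ z, f (x k) ≤ f z) ∧ (∀ z, (∀ w, f z ≤ f w) → z = x k)) ∧
      x k = (B k).mulVec (∑ i ∈ Finset.range k, (Ai i)ᵀ.mulVec (bi i)) := by
  -- injectivity of L
  have hLinj : ∀ v : Fin n → ℝ, L *ᵥ v = 0 → v = 0 := by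
    have hker : LinearMap.ker L.mulVecLin = ⊥ := by
      have hrn := LinearMap.finrank_range_add_finrank_ker L.mulVecLin
      rw [show Module.finrank ℝ (LinearMap.range L.mulVecLin) = L.rank from rfl, hL] at hrn
      have hfin : Module.finrank ℝ (Fin n → ℝ) = n := by simp
      rw [hfin] at hrn
      have : Module.finrank ℝ (LinearMap.ker L.mulVecLin) = 0 := by omega
      exact Submodule.finrank_eq_zero.mp this
    intro v hv
    have : v ∈ LinearMap.ker L.mulVecLin := by
      simpa [Matrix.mulVecLin_apply] using hv
    simpa [hker] using this
  have hLTL : (Lᵀ * L).PosDef := my_posDef_transpose_mul_self L hLinj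
  -- the matrices N j
  set N : ℕ → Matrix (Fin n) (Fin n) ℝ :=
    fun j => lam j • (Lᵀ * L) + ∑ i ∈ Finset.range j, (Ai i)ᵀ * Ai i with hN
  have hAPSD : ∀ i : ℕ, ((Ai i)ᵀ * Ai i).PosSemidef := by
    intro i
    have := posSemidef_conjTranspose_mul_self (Ai i)
    rwa [conjTranspose_eq_transpose_of_trivial] at this
  have hSumPSD : ∀ j : ℕ, (∑ i ∈ Finset.range j, (Ai i)ᵀ * Ai i).PosSemidef :=
    fun j => my_posSemidef_sum j _ hAPSD
  have hNpd : ∀ j, 0 < j → j ≤ k → (N j).PosDef := by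
    intro j hj hjk
    exact (my_posDef_smul hLTL (hpos j hj hjk)).add_posSemidef (hSumPSD j)
  -- invariant
  have hinv : ∀ j, j ≤ k → (N j) *ᵥ x j = ∑ i ∈ Finset.range j, (Ai i)ᵀ *ᵥ bi i := by
    intro j
    induction j with
    | zero =>
      intro _
      have hlam0 : lam 0 = 0 := by rw [hlamdef]; simp
      simp [hN, hlam0]
    | succ j ih =>
      intro hjk
      have hIH := ih (Nat.le_of_succ_le hjk)
      have hju : IsUnit (N (j + 1)) := (hNpd (j + 1) (Nat.succ_pos j) hjk).isUnit
      have hBinv : (N (j + 1)) * (B (j + 1)) = 1 := by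
        rw [hB (j + 1)]
        exact mul_nonsing_inv _ ((Matrix.isUnit_iff_isUnit_det _).mp hju)
      set v : Fin n → ℝ := (Ai j)ᵀ *ᵥ ((Ai j) *ᵥ x j - bi j) + Lam j • (Lᵀ * L) *ᵥ x j with hv
      have hstep : x (j + 1) = x j - (B (j + 1)) *ᵥ v := hx j
      have hNv : (N (j + 1)) *ᵥ ((B (j + 1)) *ᵥ v) = v := by
        rw [mulVec_mulVec, hBinv, one_mulVec]
      have hlamsucc : lam (j + 1) = lam j + Lam j := by
        rw [hlamdef, hlamdef, Finset.sum_range_succ]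
      calc (N (j + 1)) *ᵥ x (j + 1)
          = (N (j + 1)) *ᵥ x j - v := by rw [hstep, mulVec_sub, hNv]
        _ = (N j) *ᵥ x j + (Ai j)ᵀ *ᵥ bi j := by
            simp only [hN, hv, add_mulVec, smul_mulVec, Finset.sum_range_succ,
              hlamsucc, add_smul, mulVec_sub, ← mulVec_mulVec]
            abel
        _ = ∑ i ∈ Finset.range (j + 1), (Ai i)ᵀ *ᵥ bi i := by
            rw [hIH, Finset.sum_range_succ]
  -- conclusion part 2
  have hNk := hNpd k hk le_rfl
  have hinvk := hinv k le_rfl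
  have hBk : (B k) * (N k) = 1 := by
    rw [hB k]
    exact nonsing_inv_mul _ ((Matrix.isUnit_iff_isUnit_det _).mp hNk.isUnit)
  have hxk : x k = (B k) *ᵥ (∑ i ∈ Finset.range k, (Ai i)ᵀ *ᵥ bi i) := by
    rw [← hinvk, mulVec_mulVec, hBk, one_mulVec]
  refine ⟨?_, hxk⟩
  -- expansion of f
  have hfq : ∀ z, f z = z ⬝ᵥ (N k) *ᵥ z
      - 2 * ((∑ i ∈ Finset.range k, (Ai i)ᵀ *ᵥ bi i) ⬝ᵥ z)
      + ∑ i ∈ Finset.range k, bi i ⬝ᵥ bi i := by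
    intro z
    rw [hf z]
    have h1 : ∀ i ∈ Finset.range k, ∑ p, ((Ai i) *ᵥ z - bi i) p ^ 2
        = z ⬝ᵥ ((Ai i)ᵀ * Ai i) *ᵥ z - 2 * (((Ai i)ᵀ *ᵥ bi i) ⬝ᵥ z) + bi i ⬝ᵥ bi i := by
      intro i _
      rw [my_sum_sq_eq_dot, my_expand_sq]
    rw [Finset.sum_congr rfl h1]
    have h2 : lam k * ∑ p, (L *ᵥ z) p ^ 2 = z ⬝ᵥ (lam k • (Lᵀ * L)) *ᵥ z := by
      rw [my_sum_sq_eq_dot, smul_mulVec, dotProduct_smul, smul_eq_mul]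
      congr 1
      exact (my_dot_self L z).symm
    rw [h2]
    have h3 : z ⬝ᵥ (N k) *ᵥ z = z ⬝ᵥ (lam k • (Lᵀ * L)) *ᵥ z
        + ∑ i ∈ Finset.range k, z ⬝ᵥ ((Ai i)ᵀ * Ai i) *ᵥ z := by
      simp only [hN]
      rw [add_mulVec, dotProduct_add, my_sum_mulVec, my_dotProduct_sum]
    have h4 : (∑ i ∈ Finset.range k, (Ai i)ᵀ *ᵥ bi i) ⬝ᵥ z
        = ∑ i ∈ Finset.range k, ((Ai i)ᵀ *ᵥ bi i) ⬝ᵥ z := by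
      rw [my_sum_dotProduct]
    rw [h3, h4, Finset.sum_add_distrib, Finset.sum_sub_distrib, Finset.mul_sum]
    ring
  exact my_quad_unique_min (N k) hNk _ _ f hfq (x k) hinvk
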